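/- For every complex number s with Re(s^2) > 0 (or more simply, for s a positive real) and every l > 0, the integral from 0 to ∞ of e^{-t s^2} · e^{-l^2/(4t)} / (4πt)^{1/2} dt equals (1/(2s)) · e^{-s·l}. -/

import Mathlib

open Real MeasureTheory Set

section Glasser

variable {a b : ℝ}

/-- The Glasser integrand. -/
private noncomputable def gl (a b x : ℝ) : ℝ := Real.exp (-(a * x - b * x⁻¹) ^ 2)

private lemma integrableOn_gl (ha : 0 < a) (hb : 0 < b) :
    IntegrableOn (gl a b) (Ioi 0) := by
  have hint : Integrable (fun x : ℝ => Real.exp (2 * a * b) * Real.exp (-(a ^ 2) * x ^ 2)) :=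
    (integrable_exp_neg_mul_sq (by positivity)).const_mul _
  refine (hint.integrableOn.mono' ?_ ?_)
  · refine (ContinuousOn.aestronglyMeasurable ?_ measurableSet_Ioi)
    exact Real.continuous_exp.comp_continuousOn
      (((continuous_const.mul continuous_id).continuousOn.sub
        (continuousOn_const.mul (continuousOn_inv₀.mono fun x (hx : (0:ℝ)<x) => hx.ne'))).pow 2).neg
  · filter_upwards [ae_restrict_mem measurableSet_Ioi] with x hx
    have hx0 : (0:ℝ) < x := hx
    rw [gl, Real.norm_eq_abs, abs_of_pos (Real.exp_pos _), ← Real.exp_add]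
    apply Real.exp_le_exp.2
    have : (a * x - b * x⁻¹) ^ 2 = a ^ 2 * x ^ 2 - 2 * a * b + (b * x⁻¹) ^ 2 := by
      field_simp; ring
    nlinarith [sq_nonneg (b * x⁻¹)]

private lemma glasser (ha : 0 < a) (hb : 0 < b) :
    ∫ x in Ioi (0:ℝ), gl a b x = Real.sqrt π / (2 * a) := by
  have ha' := ha.ne'
  have hb' := hb.ne'
  set I := ∫ x in Ioi (0:ℝ), gl a b x with hI
  set f : ℝ → ℝ := fun x => a * x - b * x⁻¹ with hf
  -- derivative of f
  have hderiv : ∀ x ∈ Ioi (0:ℝ), HasDerivWithinAt f (a + b * (x^2)⁻¹) (Ioi 0) x := by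
    intro x hx
    have hx0 : x ≠ 0 := (mem_Ioi.1 hx).ne'
    have h := ((hasDerivAt_id x).const_mul a).sub ((hasDerivAt_inv hx0).const_mul b)
    have : a * 1 - b * -(x ^ 2)⁻¹ = a + b * (x^2)⁻¹ := by ring
    rw [this] at h
    exact h.hasDerivWithinAt
  -- injectivity of f
  have hinj : InjOn f (Ioi 0) := by
    apply StrictMonoOn.injOn
    intro x hx y hy hxy
    have hx0 : (0:ℝ) < x := hx
    have hy0 : (0:ℝ) < y := hy
    have h2 : y⁻¹ < x⁻¹ := by gcongr
    have h3 : b * y⁻¹ < b * x⁻¹ := by gcongr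
    have h4 : a * x < a * y := by gcongr
    simp only [hf]
    linarith
  -- image of f is univ
  have himg : f '' Ioi 0 = univ := by
    refine eq_univ_of_forall fun y => ?_
    have hd : (0:ℝ) < y^2 + 4*a*b := by positivity
    set r := Real.sqrt (y^2 + 4*a*b) with hr
    have hsq : r ^ 2 = y^2 + 4*a*b := Real.sq_sqrt hd.le
    have hygt : |y| < r := by
      have h1 : y^2 < y^2 + 4*a*b := by nlinarith
      calc |y| = Real.sqrt (y^2) := (Real.sqrt_sq_eq_abs y).symm
        _ < r := Real.sqrt_lt_sqrt (sq_nonneg y) h1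
    set x := (y + r) / (2*a) with hx
    have hxpos : 0 < x := by
      rw [hx]
      apply div_pos ?_ (by positivity)
      have := neg_abs_le y; linarith
    refine ⟨x, hxpos, ?_⟩
    have hx0 : x ≠ 0 := hxpos.ne'
    have key : a * x ^ 2 = y * x + b := by
      rw [hx]; field_simp; nlinarith [hsq]
    show a * x - b * x⁻¹ = y
    field_simp
    nlinarith [key]
  -- gaussian over univ
  have hgauss : ∫ x : ℝ, Real.exp (-x^2) = Real.sqrt π := by
    simpa using integral_gaussian 1
  -- change of variables y = f x
  have h1 := integral_image_eq_integral_abs_deriv_smul measurableSet_Ioi hderiv hinj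
    (fun y => Real.exp (-y^2))
  rw [himg, Measure.restrict_univ, hgauss] at h1
  have e1 : Real.sqrt π = ∫ x in Ioi (0:ℝ), (a + b * (x^2)⁻¹) * gl a b x := by
    rw [h1]
    refine setIntegral_congr_fun measurableSet_Ioi fun x hx => ?_
    have hx0 : (0:ℝ) < x := hx
    rw [smul_eq_mul, abs_of_pos (by positivity)]
    rfl
  -- integrability of (a + b/x²) gl
  have hGint : IntegrableOn (fun y : ℝ => Real.exp (-y^2)) univ := by
    rw [integrableOn_univ]
    simpa using integrable_exp_neg_mul_sq (one_pos (α := ℝ))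
  have hsum : IntegrableOn (fun x => (a + b * (x^2)⁻¹) * gl a b x) (Ioi 0) := by
    have h := (integrableOn_image_iff_integrableOn_abs_deriv_smul measurableSet_Ioi hderiv hinj
      (fun y => Real.exp (-y^2))).1 (by rwa [himg])
    refine h.congr_fun (fun x hx => ?_) measurableSet_Ioi
    have hx0 : (0:ℝ) < x := hx
    beta_reduce
    rw [smul_eq_mul, abs_of_pos (by positivity)]
    rfl
  -- change of variables x ↦ (b/a) x⁻¹
  set φ : ℝ → ℝ := fun x => (b/a) * x⁻¹ with hφ
  have hderiv2 : ∀ x ∈ Ioi (0:ℝ), HasDerivWithinAt φ (-(b/a) * (x^2)⁻¹) (Ioi 0) x := by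
    intro x hx
    have hx0 : x ≠ 0 := (mem_Ioi.1 hx).ne'
    have h := (hasDerivAt_inv hx0).const_mul (b/a)
    have heq : b/a * -(x ^ 2)⁻¹ = -(b/a) * (x^2)⁻¹ := by ring
    rw [heq] at h
    exact h.hasDerivWithinAt
  have hinj2 : InjOn φ (Ioi 0) := by
    intro x hx y hy h
    have : x⁻¹ = y⁻¹ := mul_left_cancel₀ (by positivity) h
    exact inv_injective this
  have himg2 : φ '' Ioi 0 = Ioi 0 := by
    ext y
    constructor
    · rintro ⟨x, hx, rfl⟩
      have hx0 : (0:ℝ) < x := hx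
      exact mem_Ioi.2 (by positivity)
    · intro hy
      have hy0 : (0:ℝ) < y := hy
      refine ⟨(b/a) * y⁻¹, mem_Ioi.2 (by positivity), ?_⟩
      show (b/a) * ((b/a) * y⁻¹)⁻¹ = y
      field_simp
  have h2 := integral_image_eq_integral_abs_deriv_smul measurableSet_Ioi hderiv2 hinj2 (gl a b)
  rw [himg2] at h2
  have e2 : I = ∫ x in Ioi (0:ℝ), (b/a) * (x^2)⁻¹ * gl a b x := by
    rw [hI, h2]
    refine setIntegral_congr_fun measurableSet_Ioi fun x hx => ?_
    have hx0 : (0:ℝ) < x := hx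
    have hx0' : x ≠ 0 := hx0.ne'
    have hneg : -(b/a) * (x^2)⁻¹ < 0 := by
      have : (0:ℝ) < (b/a) * (x^2)⁻¹ := by positivity
      linarith
    rw [smul_eq_mul, abs_of_neg hneg]
    have harg : a * ((b/a) * x⁻¹) - b * ((b/a) * x⁻¹)⁻¹ = -(a * x - b * x⁻¹) := by
      field_simp
      ring
    show -(-(b / a) * (x ^ 2)⁻¹) * Real.exp (-(a * ((b/a) * x⁻¹) - b * ((b/a) * x⁻¹)⁻¹) ^ 2)
        = b / a * (x ^ 2)⁻¹ * gl a b x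
    rw [harg, neg_sq]
    simp only [gl]
    ring
  -- split the integral
  have hgl := integrableOn_gl ha hb
  have h_ag : IntegrableOn (fun x => a * gl a b x) (Ioi 0) := hgl.const_mul a
  have h_bg : IntegrableOn (fun x => b * (x^2)⁻¹ * gl a b x) (Ioi 0) := by
    refine (hsum.sub h_ag).congr (Filter.Eventually.of_forall fun x => ?_)
    simp only [Pi.sub_apply]
    ring
  have e4 : (∫ x in Ioi (0:ℝ), (a + b * (x^2)⁻¹) * gl a b x)
      = (∫ x in Ioi (0:ℝ), a * gl a b x) + ∫ x in Ioi (0:ℝ), b * (x^2)⁻¹ * gl a b x := by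
    rw [← integral_add h_ag h_bg]
    refine setIntegral_congr_fun measurableSet_Ioi fun x _ => ?_
    ring
  have e5 : (∫ x in Ioi (0:ℝ), a * gl a b x) = a * I := integral_const_mul a _
  have e6 : (∫ x in Ioi (0:ℝ), b * (x^2)⁻¹ * gl a b x) = a * I := by
    rw [e2, ← integral_const_mul]
    refine setIntegral_congr_fun measurableSet_Ioi fun x hx => ?_
    have hx0' : x ≠ 0 := (mem_Ioi.1 hx).ne'
    field_simp
  have : Real.sqrt π = 2 * a * I := by
    rw [e1, e4, e5, e6]; ring
  rw [this]
  field_simp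

private lemma glasser' (ha : 0 < a) (hb : 0 < b) :
    ∫ x in Ioi (0:ℝ), Real.exp (-(a^2 * x^2 + b^2 * (x^2)⁻¹))
      = Real.sqrt π / (2 * a) * Real.exp (-(2*a*b)) := by
  have : ∫ x in Ioi (0:ℝ), Real.exp (-(a^2 * x^2 + b^2 * (x^2)⁻¹))
      = ∫ x in Ioi (0:ℝ), Real.exp (-(2*a*b)) * gl a b x := by
    refine setIntegral_congr_fun measurableSet_Ioi fun x hx => ?_
    have hx0' : x ≠ 0 := (mem_Ioi.1 hx).ne'
    rw [gl, ← Real.exp_add]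
    congr 1
    field_simp
    ring
  rw [this, integral_const_mul, glasser ha hb]
  ring

end Glasser

/-- Heat-kernel subordination formula:
`∫_0^∞ e^{-t s²} e^{-l²/(4t)} (4πt)^{-1/2} dt = e^{-s l}/(2 s)` for `s, l > 0`. -/
theorem integral_exp_heat_kernel (s l : ℝ) (hs : 0 < s) (hl : 0 < l) :
    ∫ t in Set.Ioi (0 : ℝ),
        Real.exp (-t * s ^ 2) * Real.exp (-l ^ 2 / (4 * t)) / Real.sqrt (4 * π * t) =
      1 / (2 * s) * Real.exp (-s * l) := by
  have hsub := integral_comp_rpow_Ioi_of_pos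
    (g := fun t => Real.exp (-t * s^2) * Real.exp (-l^2 / (4*t)) / Real.sqrt (4 * π * t))
    (p := (2:ℝ)) two_pos
  rw [← hsub]
  have key : (∫ x in Ioi (0:ℝ), ((2:ℝ) * x ^ ((2:ℝ) - 1)) •
      (Real.exp (-(x ^ (2:ℝ)) * s^2) * Real.exp (-l^2 / (4 * x ^ (2:ℝ))) /
        Real.sqrt (4 * π * x ^ (2:ℝ))))
      = ∫ x in Ioi (0:ℝ), (Real.sqrt π)⁻¹ *
          Real.exp (-(s^2 * x^2 + (l/2)^2 * (x^2)⁻¹)) := by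
    refine setIntegral_congr_fun measurableSet_Ioi fun x hx => ?_
    have hx0 : (0:ℝ) < x := hx
    have hx0' : x ≠ 0 := hx0.ne'
    have hrp : x ^ ((2:ℝ) - 1) = x := by norm_num
    have hrp2 : x ^ ((2:ℝ)) = x ^ 2 := by
      rw [show ((2:ℝ)) = ((2:ℕ):ℝ) by norm_num, Real.rpow_natCast]
    have hsqrt : Real.sqrt (4 * π * x^2) = 2 * Real.sqrt π * x := by
      rw [show 4 * π * x^2 = (2 * Real.sqrt π * x)^2 by
        rw [mul_pow, mul_pow, Real.sq_sqrt pi_pos.le]; ring]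
      exact Real.sqrt_sq (by positivity)
    have hE : Real.exp (-(x^2) * s^2) * Real.exp (-l^2 / (4 * x^2))
        = Real.exp (-(s^2 * x^2 + (l/2)^2 * (x^2)⁻¹)) := by
      rw [← Real.exp_add]
      congr 1
      field_simp
      ring
    rw [smul_eq_mul, hrp, hrp2, hsqrt, hE]
    have hπ : Real.sqrt π ≠ 0 := by positivity
    field_simp
  rw [key, integral_const_mul, glasser' hs (by positivity : (0:ℝ) < l/2)]
  have hπ : Real.sqrt π ≠ 0 := by positivity
  rw [show -(2 * s * (l/2)) = -s * l by ring]
  field_simp
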